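/- Assume ℛ₀ > 1, assume in addition that f(x) → +∞ as x → +∞, let c > c*, and let λ₁ be the smaller positive root of Δ(·, c) = 0. Let (S, I) be a traveling wave profile with speed c such that 0 < S(ξ) < S₀ and 0 < I(ξ) ≤ e^{λ₁ξ} for all ξ ∈ ℝ. Then I is bounded on ℝ. -/

import Mathlib

open Real Filter

/-- Elementary integral of `exp (m*η)`. -/
private lemma exp_mul_integral (m p q : ℝ) (hm : 0 < m) :
    ∫ η in p..q, Real.exp (m * η) = (Real.exp (m * q) - Real.exp (m * p)) / m := by
  have h : ∀ x : ℝ, HasDerivAt (fun t => Real.exp (m * t) / m) (Real.exp (m * x)) x := by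
    intro x
    have h1 : HasDerivAt (fun t : ℝ => m * t) m x := by
      simpa using (hasDerivAt_id x).const_mul m
    have h2 := (h1.exp).div_const m
    refine h2.congr_deriv ?_
    rw [mul_div_assoc, div_self hm.ne', mul_one]
  rw [intervalIntegral.integral_eq_sub_of_hasDerivAt (fun x _ => h x)
    ((Real.continuous_exp.comp (continuous_const.mul continuous_id)).intervalIntegrable p q)]
  ring

set_option maxHeartbeats 1600000 in
/-- **Boundedness of the infected component** (Lemma 3.5 / Appendix C). -/
theorem I_bounded
    (d₁ d₂ Λ β μ₁ μ₂ : ℝ) (hd₁ : 0 < d₁) (hd₂ : 0 < d₂) (hΛ : 0 < Λ)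
    (hβ : 0 < β) (hμ₁ : 0 < μ₁) (hμ₂ : 0 < μ₂)
    (f : ℝ → ℝ) (hf0 : f 0 = 0) (hfC1 : ContDiff ℝ 1 f)
    (hf' : ∀ I : ℝ, 0 ≤ I → 0 < deriv f I)
    (hfratio : ∀ I J : ℝ, 0 < I → I ≤ J → f J / J ≤ f I / I)
    (hfinf : Tendsto f atTop atTop)
    (hR₀ : 1 < β * (Λ / μ₁) * deriv f 0 / μ₂)
    (lamstar cstar : ℝ) (hlamstar : 0 < lamstar) (hcstar : 0 < cstar)
    (hΔstar : d₂ * (Real.exp lamstar + Real.exp (-lamstar) - 2)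
      - cstar * lamstar + β * (Λ / μ₁) * deriv f 0 - μ₂ = 0)
    (hdΔstar : d₂ * (Real.exp lamstar - Real.exp (-lamstar)) - cstar = 0)
    (c : ℝ) (hc : cstar < c)
    (lam₁ : ℝ) (hlam₁pos : 0 < lam₁) (hlam₁lt : lam₁ < lamstar)
    (hlam₁root : d₂ * (Real.exp lam₁ + Real.exp (-lam₁) - 2)
      - c * lam₁ + β * (Λ / μ₁) * deriv f 0 - μ₂ = 0)
    (S I : ℝ → ℝ) (hS : ContDiff ℝ 1 S) (hI : ContDiff ℝ 1 I)
    (hSeq : ∀ ξ : ℝ, c * deriv S ξ =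
      d₁ * (S (ξ + 1) + S (ξ - 1) - 2 * S ξ) + Λ - μ₁ * S ξ - β * S ξ * f (I ξ))
    (hIeq : ∀ ξ : ℝ, c * deriv I ξ =
      d₂ * (I (ξ + 1) + I (ξ - 1) - 2 * I ξ) + β * S ξ * f (I ξ) - μ₂ * I ξ)
    (hSbd : ∀ ξ : ℝ, 0 < S ξ ∧ S ξ < Λ / μ₁)
    (hIbd : ∀ ξ : ℝ, 0 < I ξ ∧ I ξ ≤ Real.exp (lam₁ * ξ)) :
    ∃ C : ℝ, ∀ ξ : ℝ, I ξ ≤ C := by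
  have hc0 : 0 < c := hcstar.trans hc
  have hS0 : 0 < Λ / μ₁ := div_pos hΛ hμ₁
  set S0 := Λ / μ₁ with hS0def
  have hf'0 : 0 < deriv f 0 := hf' 0 le_rfl
  -- continuity facts
  have hScont : Continuous S := hS.continuous
  have hIcont : Continuous I := hI.continuous
  have hfcont : Continuous f := hfC1.continuous
  have hS'cont : Continuous (deriv S) := hS.continuous_deriv le_rfl
  have hSdiff : ∀ x : ℝ, HasDerivAt S (deriv S x) x :=
    fun x => ((hS.differentiable one_ne_zero) x).hasDerivAt
  have hIdiff : ∀ x : ℝ, HasDerivAt I (deriv I x) x :=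
    fun x => ((hI.differentiable one_ne_zero) x).hasDerivAt
  have hgcont : Continuous (fun η : ℝ => β * S η * f (I η)) :=
    (continuous_const.mul hScont).mul (hfcont.comp hIcont)
  have hI1cont : Continuous (fun η : ℝ => I (η + 1)) :=
    hIcont.comp (continuous_id.add continuous_const)
  have hI2cont : Continuous (fun η : ℝ => I (η - 1)) :=
    hIcont.comp (continuous_id.sub continuous_const)
  -- positivity of f on the positive axis
  have hfmono : StrictMonoOn f (Set.Ici (0:ℝ)) := by
    apply strictMonoOn_of_deriv_pos (convex_Ici 0) hfcont.continuousOn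
    intro x hx
    rw [interior_Ici] at hx
    exact hf' x hx.le
  have hfIpos : ∀ ξ : ℝ, 0 < f (I ξ) := by
    intro ξ
    have h := hfmono (Set.mem_Ici.mpr le_rfl) (Set.mem_Ici.mpr (hIbd ξ).1.le) (hIbd ξ).1
    rwa [hf0] at h
  have hgnn : ∀ η : ℝ, 0 ≤ β * S η * f (I η) :=
    fun η => (mul_pos (mul_pos hβ (hSbd η).1) (hfIpos η)).le
  -- constants
  set k := (2*d₂ + μ₂)/c with hkdef
  have hk : 0 < k := div_pos (by linarith) hc0
  have hck : c * k = 2*d₂ + μ₂ := by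
    rw [hkdef]; field_simp
  have hkl : 0 < k + lam₁ := by linarith
  set K₁ := c*S0 + 2*d₁*S0 + Λ with hK₁def
  have hK₁pos : 0 < K₁ := by
    have h1 : 0 < c * S0 := mul_pos hc0 hS0
    have h2 : 0 < d₁ * S0 := mul_pos hd₁ hS0
    rw [hK₁def]; linarith
  -- ============ Step 2 : unit production bound ============
  have sInt : ∀ p : ℝ, (0 ≤ ∫ η in p..(p+1), S η) ∧ (∫ η in p..(p+1), S η) ≤ S0 := by
    intro p
    constructor
    · exact intervalIntegral.integral_nonneg (by linarith) (fun x _ => (hSbd x).1.le)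
    · calc (∫ η in p..(p+1), S η) ≤ ∫ _η in p..(p+1), S0 := by
            apply intervalIntegral.integral_mono_on (by linarith)
              (hScont.intervalIntegrable _ _) (continuous_const.intervalIntegrable _ _)
            exact fun x _ => (hSbd x).2.le
        _ = S0 := by
            rw [intervalIntegral.integral_const]
            simp
  have step2 : ∀ a : ℝ, (∫ η in a..(a+1), β * S η * f (I η)) ≤ K₁ := by
    intro a
    have hdecomp : ∀ η : ℝ, β * S η * f (I η) =
        -(c * deriv S η) + d₁ * S (η+1) + d₁ * S (η-1) + (Λ - (2*d₁ + μ₁) * S η) := by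
      intro η
      linear_combination hSeq η
    rw [intervalIntegral.integral_congr (g := fun η : ℝ =>
        -(c * deriv S η) + d₁ * S (η+1) + d₁ * S (η-1) + (Λ - (2*d₁ + μ₁) * S η))
        (fun η _ => hdecomp η)]
    have i0 : IntervalIntegrable (fun η : ℝ => -(c * deriv S η)) MeasureTheory.volume a (a+1) :=
      ((continuous_const.mul hS'cont).neg).intervalIntegrable _ _
    have i1 : IntervalIntegrable (fun η : ℝ => d₁ * S (η+1)) MeasureTheory.volume a (a+1) :=
      (continuous_const.mul (hScont.comp (continuous_id.add continuous_const))).intervalIntegrable _ _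
    have i2 : IntervalIntegrable (fun η : ℝ => d₁ * S (η-1)) MeasureTheory.volume a (a+1) :=
      (continuous_const.mul (hScont.comp (continuous_id.sub continuous_const))).intervalIntegrable _ _
    have i3 : IntervalIntegrable (fun η : ℝ => Λ - (2*d₁ + μ₁) * S η) MeasureTheory.volume a (a+1) :=
      (continuous_const.sub (continuous_const.mul hScont)).intervalIntegrable _ _
    rw [intervalIntegral.integral_add ((i0.add i1).add i2) i3,
        intervalIntegral.integral_add (i0.add i1) i2,
        intervalIntegral.integral_add i0 i1]
    have v0 : (∫ η in a..(a+1), -(c * deriv S η)) = c * S a - c * S (a+1) := by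
      rw [intervalIntegral.integral_neg, intervalIntegral.integral_const_mul,
          intervalIntegral.integral_eq_sub_of_hasDerivAt (fun x _ => hSdiff x)
            (hS'cont.intervalIntegrable _ _)]
      ring
    have v1 : (∫ η in a..(a+1), d₁ * S (η+1)) = d₁ * ∫ η in (a+1)..(a+1+1), S η := by
      rw [intervalIntegral.integral_const_mul, intervalIntegral.integral_comp_add_right S 1]
    have v2 : (∫ η in a..(a+1), d₁ * S (η-1)) = d₁ * ∫ η in (a-1)..(a-1+1), S η := by
      rw [intervalIntegral.integral_const_mul, intervalIntegral.integral_comp_sub_right S 1]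
      norm_num
    have v3 : (∫ η in a..(a+1), (Λ - (2*d₁ + μ₁) * S η))
        = Λ - (2*d₁ + μ₁) * ∫ η in a..(a+1), S η := by
      rw [intervalIntegral.integral_sub (f := fun _ => Λ) (g := fun η => (2*d₁ + μ₁) * S η)
          (continuous_const.intervalIntegrable _ _)
          ((continuous_const.mul hScont).intervalIntegrable _ _),
          intervalIntegral.integral_const_mul, intervalIntegral.integral_const]
      simp
    rw [v0, v1, v2, v3]
    have b1 := sInt (a+1)
    have b2 := sInt (a-1)
    have b3 := sInt a
    have w1 : d₁ * (∫ η in (a+1)..(a+1+1), S η) ≤ d₁ * S0 :=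
      mul_le_mul_of_nonneg_left b1.2 hd₁.le
    have w2 : d₁ * (∫ η in (a-1)..(a-1+1), S η) ≤ d₁ * S0 :=
      mul_le_mul_of_nonneg_left b2.2 hd₁.le
    have w3 : 0 ≤ (2*d₁ + μ₁) * ∫ η in a..(a+1), S η :=
      mul_nonneg (by linarith) b3.1
    have hSa2 : c * S a ≤ c * S0 := (mul_le_mul_of_nonneg_left (hSbd a).2.le hc0.le)
    have hSa1 : 0 ≤ c * S (a+1) := (mul_nonneg hc0.le (hSbd (a+1)).1.le)
    rw [hK₁def]
    linarith
  -- ============ iterated production bound ============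
  have stepN : ∀ (n : ℕ) (ξ : ℝ),
      (∫ η in (ξ - (n:ℝ))..ξ, β * S η * f (I η)) ≤ (n:ℝ) * K₁ := by
    intro n
    induction n with
    | zero => intro ξ; simp
    | succ n ih =>
      intro ξ
      have h1 : (∫ η in (ξ - ((n:ℝ)+1))..(ξ - (n:ℝ)), β * S η * f (I η)) ≤ K₁ := by
        have h := step2 (ξ - ((n:ℝ)+1))
        have heq : ξ - ((n:ℝ)+1) + 1 = ξ - (n:ℝ) := by ring
        rwa [heq] at h
      have h2 := ih ξ
      have hadd := intervalIntegral.integral_add_adjacent_intervals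
        (μ := MeasureTheory.volume) (a := ξ - ((n:ℝ)+1)) (b := ξ - (n:ℝ)) (c := ξ)
        (f := fun η : ℝ => β * S η * f (I η))
        (hgcont.intervalIntegrable _ _) (hgcont.intervalIntegrable _ _)
      push_cast
      rw [← hadd]
      linarith
  -- ============ key contraction step (Duhamel) ============
  have key : ∀ (ℓ : ℕ) (A B : ℝ), 0 ≤ A → 0 ≤ B →
      (∀ η : ℝ, I η ≤ A * Real.exp (lam₁ * η) + B) → ∀ ξ : ℝ,
      I ξ ≤ A * (d₂*(Real.exp lam₁ + Real.exp (-lam₁))/(c*(k+lam₁))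
              + Real.exp (-((k+lam₁)*(ℓ:ℝ)))) * Real.exp (lam₁*ξ)
          + ((2*d₂/(c*k) + Real.exp (-(k*(ℓ:ℝ)))) * B + (ℓ:ℝ) * K₁ / c) := by
    intro ℓ A B hA hB hIH ξ
    have haξ : ξ - (ℓ:ℝ) ≤ ξ := by
      have := Nat.cast_nonneg (α := ℝ) ℓ; linarith
    -- Duhamel identity
    have hw : ∀ η : ℝ, HasDerivAt (fun t => Real.exp (k*t) * I t)
        ((1/c) * (Real.exp (k*η) * (d₂*(I (η+1) + I (η-1)) + β * S η * f (I η)))) η := by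
      intro η
      have h1 : HasDerivAt (fun t : ℝ => Real.exp (k*t)) (Real.exp (k*η) * k) η := by
        simpa using ((hasDerivAt_id η).const_mul k).exp
      have h2 := h1.mul (hIdiff η)
      refine h2.congr_deriv ?_
      symm
      have h3 := hIeq η
      rw [one_div, inv_mul_eq_div, div_eq_iff hc0.ne']
      linear_combination (-(Real.exp (k*η))) * h3 - (Real.exp (k*η) * I η) * hck
    have hFcont : Continuous (fun η : ℝ =>
        (1/c) * (Real.exp (k*η) * (d₂*(I (η+1) + I (η-1)) + β * S η * f (I η)))) := by
      apply continuous_const.mul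
      apply (Real.continuous_exp.comp (continuous_const.mul continuous_id)).mul
      exact (continuous_const.mul (hI1cont.add hI2cont)).add hgcont
    have hFTC : (∫ η in (ξ - (ℓ:ℝ))..ξ,
        (1/c) * (Real.exp (k*η) * (d₂*(I (η+1) + I (η-1)) + β * S η * f (I η))))
        = Real.exp (k*ξ) * I ξ - Real.exp (k*(ξ - (ℓ:ℝ))) * I (ξ - (ℓ:ℝ)) := by
      have h := intervalIntegral.integral_eq_sub_of_hasDerivAt
        (a := ξ - (ℓ:ℝ)) (b := ξ) (fun η _ => hw η) (hFcont.intervalIntegrable _ _)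
      simpa using h
    -- pointwise bound of the integrand
    have hbigcont : Continuous (fun η : ℝ =>
        (d₂*A*(Real.exp lam₁ + Real.exp (-lam₁))/c) * Real.exp ((k+lam₁)*η)
        + (2*d₂*B/c) * Real.exp (k*η)
        + (Real.exp (k*ξ)/c) * (β * S η * f (I η))) := by
      apply Continuous.add
      · apply Continuous.add
        · exact continuous_const.mul
            (Real.continuous_exp.comp (continuous_const.mul continuous_id))
        · exact continuous_const.mul
            (Real.continuous_exp.comp (continuous_const.mul continuous_id))
      · exact continuous_const.mul hgcont
    have hpt : ∀ η ∈ Set.Icc (ξ - (ℓ:ℝ)) ξ,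
        (1/c) * (Real.exp (k*η) * (d₂*(I (η+1) + I (η-1)) + β * S η * f (I η)))
        ≤ (d₂*A*(Real.exp lam₁ + Real.exp (-lam₁))/c) * Real.exp ((k+lam₁)*η)
          + (2*d₂*B/c) * Real.exp (k*η)
          + (Real.exp (k*ξ)/c) * (β * S η * f (I η)) := by
      intro η hη
      have hsum : d₂ * (I (η+1) + I (η-1)) ≤
          d₂ * ((A * Real.exp (lam₁*(η+1)) + B) + (A * Real.exp (lam₁*(η-1)) + B)) :=
        mul_le_mul_of_nonneg_left (add_le_add (hIH (η+1)) (hIH (η-1))) hd₂.le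
      have hgk : Real.exp (k*η) * (β * S η * f (I η))
          ≤ Real.exp (k*ξ) * (β * S η * f (I η)) :=
        mul_le_mul_of_nonneg_right
          (Real.exp_le_exp.2 (mul_le_mul_of_nonneg_left hη.2 hk.le)) (hgnn η)
      have hc1 : (0:ℝ) ≤ 1/c := by positivity
      calc (1/c) * (Real.exp (k*η) * (d₂*(I (η+1) + I (η-1)) + β * S η * f (I η)))
          = (1/c) * (Real.exp (k*η) * (d₂*(I (η+1) + I (η-1))))
            + (1/c) * (Real.exp (k*η) * (β * S η * f (I η))) := by ring
        _ ≤ (1/c) * (Real.exp (k*η) *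
              (d₂ * ((A * Real.exp (lam₁*(η+1)) + B) + (A * Real.exp (lam₁*(η-1)) + B))))
            + (1/c) * (Real.exp (k*ξ) * (β * S η * f (I η))) := by
            apply add_le_add
            · exact mul_le_mul_of_nonneg_left
                (mul_le_mul_of_nonneg_left hsum (Real.exp_pos _).le) hc1
            · exact mul_le_mul_of_nonneg_left hgk hc1
        _ = (d₂*A*(Real.exp lam₁ + Real.exp (-lam₁))/c) * Real.exp ((k+lam₁)*η)
            + (2*d₂*B/c) * Real.exp (k*η)
            + (Real.exp (k*ξ)/c) * (β * S η * f (I η)) := by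
            rw [show lam₁*(η+1) = lam₁*η + lam₁ by ring,
                show lam₁*(η-1) = lam₁*η + (-lam₁) by ring,
                show (k+lam₁)*η = k*η + lam₁*η by ring,
                Real.exp_add, Real.exp_add, Real.exp_add]
            ring
    have hmono := intervalIntegral.integral_mono_on (μ := MeasureTheory.volume) haξ
      (hFcont.intervalIntegrable _ _) (hbigcont.intervalIntegrable _ _) hpt
    -- compute/bound the big integral
    have j1 : IntervalIntegrable (fun η : ℝ =>
        (d₂*A*(Real.exp lam₁ + Real.exp (-lam₁))/c) * Real.exp ((k+lam₁)*η))
        MeasureTheory.volume (ξ - (ℓ:ℝ)) ξ :=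
      (continuous_const.mul (Real.continuous_exp.comp
        (continuous_const.mul continuous_id))).intervalIntegrable _ _
    have j2 : IntervalIntegrable (fun η : ℝ => (2*d₂*B/c) * Real.exp (k*η))
        MeasureTheory.volume (ξ - (ℓ:ℝ)) ξ :=
      (continuous_const.mul (Real.continuous_exp.comp
        (continuous_const.mul continuous_id))).intervalIntegrable _ _
    have j3 : IntervalIntegrable (fun η : ℝ => (Real.exp (k*ξ)/c) * (β * S η * f (I η)))
        MeasureTheory.volume (ξ - (ℓ:ℝ)) ξ :=
      (continuous_const.mul hgcont).intervalIntegrable _ _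
    have hsplit : (∫ η in (ξ - (ℓ:ℝ))..ξ,
        ((d₂*A*(Real.exp lam₁ + Real.exp (-lam₁))/c) * Real.exp ((k+lam₁)*η)
        + (2*d₂*B/c) * Real.exp (k*η)
        + (Real.exp (k*ξ)/c) * (β * S η * f (I η))))
        = (d₂*A*(Real.exp lam₁ + Real.exp (-lam₁))/c) *
            ((Real.exp ((k+lam₁)*ξ) - Real.exp ((k+lam₁)*(ξ - (ℓ:ℝ))))/(k+lam₁))
          + (2*d₂*B/c) * ((Real.exp (k*ξ) - Real.exp (k*(ξ - (ℓ:ℝ))))/k)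
          + (Real.exp (k*ξ)/c) * ∫ η in (ξ - (ℓ:ℝ))..ξ, β * S η * f (I η) := by
      rw [intervalIntegral.integral_add (j1.add j2) j3, intervalIntegral.integral_add j1 j2,
          intervalIntegral.integral_const_mul, intervalIntegral.integral_const_mul,
          intervalIntegral.integral_const_mul,
          exp_mul_integral (k+lam₁) _ _ hkl, exp_mul_integral k _ _ hk]
    rw [hsplit] at hmono
    have c1nn : (0:ℝ) ≤ d₂*A*(Real.exp lam₁ + Real.exp (-lam₁))/c :=
      div_nonneg (mul_nonneg (mul_nonneg hd₂.le hA) (by positivity)) hc0.le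
    have c2nn : (0:ℝ) ≤ 2*d₂*B/c :=
      div_nonneg (mul_nonneg (by linarith) hB) hc0.le
    have e1 : Real.exp (k*(ξ - (ℓ:ℝ))) * I (ξ - (ℓ:ℝ))
        ≤ Real.exp (k*(ξ - (ℓ:ℝ))) * (A * Real.exp (lam₁*(ξ - (ℓ:ℝ))) + B) :=
      mul_le_mul_of_nonneg_left (hIH _) (Real.exp_pos _).le
    have e2 : (d₂*A*(Real.exp lam₁ + Real.exp (-lam₁))/c) *
          ((Real.exp ((k+lam₁)*ξ) - Real.exp ((k+lam₁)*(ξ - (ℓ:ℝ))))/(k+lam₁))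
        ≤ (d₂*A*(Real.exp lam₁ + Real.exp (-lam₁))/c) * (Real.exp ((k+lam₁)*ξ)/(k+lam₁)) := by
      apply mul_le_mul_of_nonneg_left _ c1nn
      apply (div_le_div_iff_of_pos_right hkl).mpr
      linarith [Real.exp_pos ((k+lam₁)*(ξ - (ℓ:ℝ)))]
    have e3 : (2*d₂*B/c) * ((Real.exp (k*ξ) - Real.exp (k*(ξ - (ℓ:ℝ))))/k)
        ≤ (2*d₂*B/c) * (Real.exp (k*ξ)/k) := by
      apply mul_le_mul_of_nonneg_left _ c2nn
      apply (div_le_div_iff_of_pos_right hk).mpr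
      linarith [Real.exp_pos (k*(ξ - (ℓ:ℝ)))]
    have e4 : (Real.exp (k*ξ)/c) * (∫ η in (ξ - (ℓ:ℝ))..ξ, β * S η * f (I η))
        ≤ (Real.exp (k*ξ)/c) * ((ℓ:ℝ) * K₁) :=
      mul_le_mul_of_nonneg_left (stepN ℓ ξ) (by positivity)
    have upper : Real.exp (k*ξ) * I ξ
        ≤ Real.exp (k*(ξ - (ℓ:ℝ))) * (A * Real.exp (lam₁*(ξ - (ℓ:ℝ))) + B)
          + ((d₂*A*(Real.exp lam₁ + Real.exp (-lam₁))/c) * (Real.exp ((k+lam₁)*ξ)/(k+lam₁))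
          + ((2*d₂*B/c) * (Real.exp (k*ξ)/k)
          + (Real.exp (k*ξ)/c) * ((ℓ:ℝ) * K₁))) := by
      linarith [hFTC, hmono, e1, e2, e3, e4]
    rw [← mul_le_mul_iff_of_pos_left (Real.exp_pos (k*ξ))]
    refine upper.trans (le_of_eq ?_)
    rw [show k*(ξ - (ℓ:ℝ)) = k*ξ + -(k*(ℓ:ℝ)) by ring,
        show lam₁*(ξ - (ℓ:ℝ)) = lam₁*ξ + -(lam₁*(ℓ:ℝ)) by ring,
        show (k+lam₁)*ξ = k*ξ + lam₁*ξ by ring,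
        show -((k+lam₁)*(ℓ:ℝ)) = -(k*(ℓ:ℝ)) + -(lam₁*(ℓ:ℝ)) by ring,
        Real.exp_add, Real.exp_add, Real.exp_add, Real.exp_add]
    field_simp
    ring
  -- ============ contraction constants ============
  set m₁ := d₂*(Real.exp lam₁ + Real.exp (-lam₁))/(c*(k+lam₁)) with hm₁def
  set θ₀b := 2*d₂/(c*k) with hθ₀def
  have hm₁lt : m₁ < 1 := by
    rw [hm₁def, div_lt_one (mul_pos hc0 hkl)]
    have hroot' : d₂*(Real.exp lam₁ + Real.exp (-lam₁))
        = 2*d₂ + c*lam₁ + μ₂ - β*S0*(deriv f 0) := by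
      linear_combination hlam₁root
    have hexpand : c*(k+lam₁) = 2*d₂ + μ₂ + c*lam₁ := by
      rw [mul_add, hck]
    have hpos : 0 < β*S0*(deriv f 0) := mul_pos (mul_pos hβ hS0) hf'0
    rw [hroot', hexpand]
    linarith
  have hθ₀lt : θ₀b < 1 := by
    rw [hθ₀def, div_lt_one (mul_pos hc0 hk), hck]
    linarith
  have hm₁nn : 0 ≤ m₁ := by
    rw [hm₁def]
    exact div_nonneg (mul_nonneg hd₂.le (by positivity)) (mul_pos hc0 hkl).le
  have hθ₀nn : 0 ≤ θ₀b := by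
    rw [hθ₀def]
    exact div_nonneg (by linarith) (mul_pos hc0 hk).le
  -- choose ℓ
  have hek1 : Real.exp (-k) < 1 := by
    rw [Real.exp_lt_one_iff]; linarith
  obtain ⟨ℓ, hℓ⟩ := exists_pow_lt_of_lt_one
    (show (0:ℝ) < min (1 - m₁) (1 - θ₀b) from lt_min (by linarith) (by linarith)) hek1
  have hexpℓ : Real.exp (-(k*(ℓ:ℝ))) < min (1 - m₁) (1 - θ₀b) := by
    have heq : Real.exp (-(k*(ℓ:ℝ))) = (Real.exp (-k))^ℓ := by
      rw [← Real.exp_nat_mul]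
      congr 1
      ring
    rw [heq]; exact hℓ
  set θ₁ := m₁ + Real.exp (-((k+lam₁)*(ℓ:ℝ))) with hθ₁def
  set θ₀' := θ₀b + Real.exp (-(k*(ℓ:ℝ))) with hθ₀'def
  have hmono2 : Real.exp (-((k+lam₁)*(ℓ:ℝ))) ≤ Real.exp (-(k*(ℓ:ℝ))) := by
    apply Real.exp_le_exp.2
    have h1 : 0 ≤ lam₁*(ℓ:ℝ) := mul_nonneg hlam₁pos.le (Nat.cast_nonneg ℓ)
    have h2 : (k+lam₁)*(ℓ:ℝ) = k*(ℓ:ℝ) + lam₁*(ℓ:ℝ) := by ring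
    linarith
  have hθ₁lt : θ₁ < 1 := by
    have h1 := min_le_left (1 - m₁) (1 - θ₀b)
    rw [hθ₁def]; linarith
  have hθ₀'lt : θ₀' < 1 := by
    have h1 := min_le_right (1 - m₁) (1 - θ₀b)
    rw [hθ₀'def]; linarith
  have hθ₁nn : 0 ≤ θ₁ := add_nonneg hm₁nn (Real.exp_pos _).le
  have hθ₀'nn : 0 ≤ θ₀' := add_nonneg hθ₀nn (Real.exp_pos _).le
  set G₀ := (ℓ:ℝ)*K₁/c with hG₀def
  have hG₀nn : 0 ≤ G₀ := by
    rw [hG₀def]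
    exact div_nonneg (mul_nonneg (Nat.cast_nonneg ℓ) hK₁pos.le) hc0.le
  set D := G₀/(1-θ₀') with hDdef
  have hDnn : 0 ≤ D := by
    rw [hDdef]; exact div_nonneg hG₀nn (by linarith)
  have h1θ : (1:ℝ) - θ₀' ≠ 0 := by linarith
  have hDfix : θ₀' * D + G₀ = D := by
    rw [hDdef]
    field_simp
    ring
  -- ============ iteration ============
  have main : ∀ (n : ℕ) (ξ : ℝ), I ξ ≤ θ₁^n * Real.exp (lam₁*ξ) + D := by
    intro n
    induction n with
    | zero =>
      intro ξ
      simp only [pow_zero, one_mul]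
      linarith [(hIbd ξ).2]
    | succ n ih =>
      intro ξ
      have h := key ℓ (θ₁^n) D (pow_nonneg hθ₁nn n) hDnn ih ξ
      rw [hDfix, ← pow_succ] at h
      exact h
  -- ============ conclusion ============
  refine ⟨D, fun ξ => ?_⟩
  have h1 := (tendsto_pow_atTop_nhds_zero_of_lt_one hθ₁nn hθ₁lt).mul_const
    (Real.exp (lam₁*ξ))
  have h2 := h1.add (tendsto_const_nhds (x := D))
  simp only [zero_mul, zero_add] at h2
  exact ge_of_tendsto' h2 (fun n => main n ξ)
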